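/- arXiv:1602.04573 — 2 statements merged into one kernel-verified Lean document; each statement's English description precedes it below -/
import Mathlib

section
/- For a nonnegative integer j and complex parameters such that no denominator vanishes, the Pochhammer identity (c-1+i)_j / (b+i)_j = \sum_{k=0}^{j} \frac{(c-b-1)_k}{(b+i+j-k)_k} \cdot \frac{(1)_j}{(1)_k (1)_{j-k}} holds, where i is a nonnegative integer. -/
noncomputable def poch (x : ℂ) (k : ℕ) : ℂ := (ascPochhammer ℂ k).eval x

lemma poch_mul (x : ℂ) (a b : ℕ) : poch x (a + b) = poch x a * poch (x + a) b := by
  unfold poch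
  rw [← ascPochhammer_mul, Polynomial.eval_mul, Polynomial.eval_comp]
  simp

lemma poch_neg (x : ℂ) (k : ℕ) :
    poch x k = (-1) ^ k * (descPochhammer ℂ k).eval (-x) := by
  have := ascPochhammer_eval_neg_eq_descPochhammer (R := ℂ) (-x) k
  simpa [poch] using this

lemma dpoch_eq_smeval (x : ℂ) (k : ℕ) :
    (descPochhammer ℂ k).eval x = (descPochhammer ℤ k).smeval x := by
  rw [← Polynomial.aeval_eq_smeval, Polynomial.aeval_def, ← Polynomial.eval_map,
    descPochhammer_map]

lemma poch_vandermonde (x y : ℂ) (n : ℕ) :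
    poch (x + y) n = ∑ k ∈ Finset.range (n + 1),
      (n.choose k : ℂ) * (poch x k * poch y (n - k)) := by
  have h := Ring.descPochhammer_smeval_add (R := ℂ) (r := -x) (s := -y) n (Commute.all _ _)
  rw [Finset.Nat.sum_antidiagonal_eq_sum_range_succ_mk] at h
  have h' : (descPochhammer ℂ n).eval (-x + -y) = ∑ k ∈ Finset.range (n + 1),
      (n.choose k : ℂ) * ((descPochhammer ℂ k).eval (-x) *
        (descPochhammer ℂ (n - k)).eval (-y)) := by
    rw [dpoch_eq_smeval, h]
    refine Finset.sum_congr rfl fun k _ => ?_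
    rw [dpoch_eq_smeval, dpoch_eq_smeval]
  have hxy : -(x + y) = -x + -y := by ring
  rw [poch_neg, hxy, h', Finset.mul_sum]
  refine Finset.sum_congr rfl fun k hk => ?_
  have hk' : k ≤ n := Nat.lt_succ_iff.mp (Finset.mem_range.mp hk)
  rw [poch_neg x, poch_neg y]
  have : ((-1 : ℂ)) ^ n = (-1) ^ k * (-1) ^ (n - k) := by
    rw [← pow_add, Nat.add_sub_cancel' hk']
  rw [this]; ring

theorem stmt2 (b c : ℂ) (i j : ℕ)
    (hb : poch (b + (i : ℂ)) j ≠ 0)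
    (hbk : ∀ k : ℕ, k ≤ j → poch (b + (i : ℂ) + (j : ℂ) - (k : ℂ)) k ≠ 0) :
    poch (c - 1 + (i : ℂ)) j / poch (b + (i : ℂ)) j =
      ∑ k ∈ Finset.range (j + 1),
        poch (c - b - 1) k / poch (b + (i : ℂ) + (j : ℂ) - (k : ℂ)) k *
          (poch 1 j / (poch 1 k * poch 1 (j - k))) := by
  have hpoch1 : ∀ m : ℕ, poch 1 m = (m.factorial : ℂ) := fun m => by
    simpa [poch] using ascPochhammer_eval_one ℂ m
  have key : ∀ k ∈ Finset.range (j + 1),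
      poch (c - b - 1) k / poch (b + (i : ℂ) + (j : ℂ) - (k : ℂ)) k *
          (poch 1 j / (poch 1 k * poch 1 (j - k))) =
      (j.choose k : ℂ) * (poch (c - b - 1) k * poch (b + (i : ℂ)) (j - k)) /
        poch (b + (i : ℂ)) j := by
    intro k hk
    have hk' : k ≤ j := Nat.lt_succ_iff.mp (Finset.mem_range.mp hk)
    have hsplit : poch (b + (i : ℂ)) j =
        poch (b + (i : ℂ)) (j - k) * poch (b + (i : ℂ) + (j : ℂ) - (k : ℂ)) k := by
      have h1 : j - k + k = j := Nat.sub_add_cancel hk'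
      have h2 : (b + (i : ℂ)) + ((j - k : ℕ) : ℂ) = b + (i : ℂ) + (j : ℂ) - (k : ℂ) := by
        push_cast [hk']; ring
      calc poch (b + (i : ℂ)) j = poch (b + (i : ℂ)) (j - k + k) := by rw [h1]
        _ = _ := by rw [poch_mul, h2]
    have hjk : poch (b + (i : ℂ)) (j - k) ≠ 0 := by
      intro h0
      apply hb
      rw [hsplit, h0, zero_mul]
    have hch : (j.choose k : ℂ) = (j.factorial : ℂ) /
        ((k.factorial : ℂ) * ((j - k).factorial : ℂ)) := by
      exact_mod_cast Nat.cast_choose ℂ hk'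
    rw [hpoch1, hpoch1, hpoch1, hsplit, hch]
    have h3 := hbk k hk'
    have hkf : (k.factorial : ℂ) ≠ 0 := Nat.cast_ne_zero.mpr k.factorial_ne_zero
    have hjkf : ((j - k).factorial : ℂ) ≠ 0 := Nat.cast_ne_zero.mpr (j - k).factorial_ne_zero
    field_simp
  rw [Finset.sum_congr rfl key, ← Finset.sum_div]
  congr 1
  have : c - 1 + (i : ℂ) = (c - b - 1) + (b + (i : ℂ)) := by ring
  rw [this, poch_vandermonde]
end

section
/- For complex x, y with |x| + |y| < 1 and complex parameters b, c, the identity \sum_{i,j=0}^{\infty} \frac{(c-1+i)_j (b)_{i+j}}{(b+i)_j \, i! \, j!} x^i y^j = (1 - x - y)^{-b} (1 - y)^{b - c + 1} holds, provided b is not a nonpositive integer (so that (b+i)_j \neq 0). -/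
open Complex in
lemma poch_succ (a : ℂ) (n : ℕ) : poch a (n + 1) = poch a n * (a + n) := by
  simp [poch, ascPochhammer_succ_right]

lemma poch_zero (a : ℂ) : poch a 0 = 1 := by simp [poch]

lemma poch_add (a : ℂ) (i j : ℕ) : poch a (i + j) = poch a i * poch (a + i) j := by
  have := congrArg (Polynomial.eval a) (ascPochhammer_mul ℂ i j)
  simpa [poch, Polynomial.eval_comp] using this.symm

lemma pochR_succ (a : ℝ) (n : ℕ) :
    (ascPochhammer ℝ (n + 1)).eval a = (ascPochhammer ℝ n).eval a * (a + n) := by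
  simp [ascPochhammer_succ_right]

lemma poch_ofReal (a : ℝ) (n : ℕ) :
    poch (a : ℂ) n = (((ascPochhammer ℝ n).eval a : ℝ) : ℂ) := by
  rw [poch, ← ascPochhammer_map (algebraMap ℝ ℂ) n, Polynomial.eval_map]
  exact Polynomial.eval₂_at_apply (algebraMap ℝ ℂ) a

lemma pochR_nonneg {a : ℝ} (ha : 0 ≤ a) (n : ℕ) : 0 ≤ (ascPochhammer ℝ n).eval a := by
  induction n with
  | zero => simp
  | succ n ih => rw [pochR_succ]; positivity

lemma norm_poch_le {w : ℂ} {r : ℝ} (hw : ‖w‖ ≤ r) (n : ℕ) :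
    ‖poch w n‖ ≤ (ascPochhammer ℝ n).eval r := by
  have hr : 0 ≤ r := le_trans (norm_nonneg w) hw
  induction n with
  | zero => simp [poch]
  | succ n ih =>
      rw [poch_succ, pochR_succ, norm_mul]
      have h1 : ‖w + (n : ℂ)‖ ≤ r + n := by
        calc ‖w + (n : ℂ)‖ ≤ ‖w‖ + ‖(n : ℂ)‖ := norm_add_le _ _
        _ ≤ r + n := by rw [Complex.norm_natCast]; linarith
      exact mul_le_mul ih h1 (norm_nonneg _) (pochR_nonneg hr n)

lemma poch_ne_zero {b : ℂ} (hb : ∀ m : ℕ, b ≠ -(m : ℂ)) (i j : ℕ) :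
    poch (b + (i : ℂ)) j ≠ 0 := by
  induction j with
  | zero => simp [poch]
  | succ j ih =>
      rw [poch_succ]
      refine mul_ne_zero ih ?_
      intro hzero
      apply hb (i + j)
      push_cast
      linear_combination hzero


open Complex Metric in
lemma one_sub_re_pos {w : ℂ} (hw : ‖w‖ < 1) : 0 < (1 - w).re := by
  have h1 : |w.re| ≤ ‖w‖ := abs_re_le_norm w
  have h2 : w.re ≤ |w.re| := le_abs_self _
  simp only [sub_re, one_re]
  linarith

open Complex Metric in
lemma one_sub_slit {w : ℂ} (hw : ‖w‖ < 1) : (1 - w) ∈ slitPlane :=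
  mem_slitPlane_iff.mpr (Or.inl (one_sub_re_pos hw))

open Complex Metric in
lemma iteratedDeriv_one_sub_cpow (a : ℂ) (n : ℕ) :
    Set.EqOn (iteratedDeriv n (fun z : ℂ => (1 - z) ^ (-a)))
      (fun w => poch a n * (1 - w) ^ (-a - n)) (ball (0:ℂ) 1) := by
  induction n with
  | zero =>
      intro w hw
      simp [iteratedDeriv_zero, poch_zero]
  | succ n ih =>
      intro w hw
      have hev : iteratedDeriv n (fun z : ℂ => (1 - z) ^ (-a))
          =ᶠ[nhds w] fun w => poch a n * (1 - w) ^ (-a - n) :=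
        Filter.eventuallyEq_of_mem (isOpen_ball.mem_nhds hw) ih
      rw [iteratedDeriv_succ]
      show deriv _ w = _
      rw [hev.deriv_eq]
      have hw1 : ‖w‖ < 1 := mem_ball_zero_iff.mp hw
      have hd : HasDerivAt (fun z : ℂ => (1 - z) ^ (-a - n))
          ((-a - n) * (1 - w) ^ (-a - n - 1) * (-1)) w :=
        HasDerivAt.cpow_const ((hasDerivAt_id w).const_sub 1) (one_sub_slit hw1)
      rw [(hd.const_mul (poch a n)).deriv]
      rw [poch_succ]
      have hexp : (-a - ((n:ℂ) + 1)) = -a - n - 1 := by ring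
      push_cast
      rw [hexp]
      ring

open Complex Metric in
lemma hasSum_binom (a : ℂ) {z : ℂ} (hz : ‖z‖ < 1) :
    HasSum (fun n : ℕ => poch a n / n.factorial * z ^ n) ((1 - z) ^ (-a)) := by
  have hdiff : DifferentiableOn ℂ (fun w : ℂ => (1 - w) ^ (-a)) (ball (0:ℂ) 1) := by
    intro w hw
    have hw1 : ‖w‖ < 1 := mem_ball_zero_iff.mp hw
    exact (HasDerivAt.cpow_const ((hasDerivAt_id w).const_sub 1)
      (one_sub_slit hw1)).differentiableAt.differentiableWithinAt
  have H := hasSum_taylorSeries_on_ball hdiff (mem_ball_zero_iff.mpr hz)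
  have h0 : (0:ℂ) ∈ ball (0:ℂ) 1 := by simp
  have heq : (fun n : ℕ => poch a n / n.factorial * z ^ n)
      = fun n : ℕ => (n.factorial : ℂ)⁻¹ • (z - 0) ^ n •
          iteratedDeriv n (fun z : ℂ => (1 - z) ^ (-a)) 0 := by
    funext n
    rw [iteratedDeriv_one_sub_cpow a n h0]
    simp only [smul_eq_mul, sub_zero]
    rw [one_cpow]
    ring
  rw [heq]
  exact H

open Complex in
lemma hasSum_binom_real (a : ℝ) {t : ℝ} (ht0 : 0 ≤ t) (ht : t < 1) :
    HasSum (fun n : ℕ => (ascPochhammer ℝ n).eval a / n.factorial * t ^ n)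
      ((1 - t) ^ (-a)) := by
  rw [← Complex.hasSum_ofReal]
  have hz : ‖(t:ℂ)‖ < 1 := by rwa [Complex.norm_real, Real.norm_eq_abs, _root_.abs_of_nonneg ht0]
  have H := hasSum_binom (a : ℂ) hz
  have heq : (fun n : ℕ => (((ascPochhammer ℝ n).eval a / n.factorial * t ^ n : ℝ) : ℂ))
      = fun n : ℕ => poch (a:ℂ) n / n.factorial * (t:ℂ) ^ n := by
    funext n; rw [poch_ofReal]; push_cast; ring
  rw [heq]
  have hval : (((1 - t) ^ (-a) : ℝ) : ℂ) = (1 - (t:ℂ)) ^ (-(a:ℂ)) := by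
    rw [Complex.ofReal_cpow (by linarith)]
    push_cast; ring_nf
  rw [hval]
  exact H

open Complex Real in
lemma cpow_mul_re_pos {u v : ℂ} (hu : 0 < u.re) (hv : 0 < v.re) (a : ℂ) :
    (u * v) ^ a = u ^ a * v ^ a := by
  have hu0 : u ≠ 0 := by intro h; rw [h] at hu; simp at hu
  have hv0 : v ≠ 0 := by intro h; rw [h] at hv; simp at hv
  have hau : |arg u| < π / 2 := abs_arg_lt_pi_div_two_iff.mpr (Or.inl hu)
  have hav : |arg v| < π / 2 := abs_arg_lt_pi_div_two_iff.mpr (Or.inl hv)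
  have harg : arg u + arg v ∈ Set.Ioc (-π) π := by
    have h1 := abs_lt.mp hau
    have h2 := abs_lt.mp hav
    constructor <;> [linarith [h1.1, h2.1]; linarith [h1.2, h2.2]]
  rw [cpow_def_of_ne_zero (mul_ne_zero hu0 hv0), cpow_def_of_ne_zero hu0,
    cpow_def_of_ne_zero hv0, ← Complex.exp_add, ← add_mul,
    (Complex.log_mul_eq_add_log_iff hu0 hv0).mpr harg]

set_option maxHeartbeats 1000000 in
open Complex in
theorem stmt3 (b c : ℂ) (hb : ∀ m : ℕ, b ≠ -(m : ℂ)) (x y : ℂ)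
    (h : ‖x‖ + ‖y‖ < 1) :
    ∑' p : ℕ × ℕ,
        poch (c - 1 + (p.1 : ℂ)) p.2 * poch b (p.1 + p.2) /
            (poch (b + (p.1 : ℂ)) p.2 * (p.1.factorial : ℂ) * (p.2.factorial : ℂ)) *
          x ^ p.1 * y ^ p.2
      = (1 - x - y) ^ (-b) * (1 - y) ^ (b - c + 1) := by
  have hx0 := norm_nonneg x
  have hy0 := norm_nonneg y
  have hy1 : ‖y‖ < 1 := by linarith
  have hx1 : ‖x‖ < 1 := by linarith
  set A : ℕ → ℂ := fun i => poch b i / i.factorial * x ^ i with hA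
  set B : ℕ → ℕ → ℂ := fun i j => poch (c - 1 + (i : ℂ)) j / j.factorial * y ^ j with hB
  -- term rewriting
  have hterm : ∀ p : ℕ × ℕ,
      poch (c - 1 + (p.1 : ℂ)) p.2 * poch b (p.1 + p.2) /
          (poch (b + (p.1 : ℂ)) p.2 * (p.1.factorial : ℂ) * (p.2.factorial : ℂ)) *
        x ^ p.1 * y ^ p.2 = A p.1 * B p.1 p.2 := by
    rintro ⟨i, j⟩
    have hne := poch_ne_zero hb i j
    have hfi : ((i.factorial : ℂ)) ≠ 0 := Nat.cast_ne_zero.mpr i.factorial_ne_zero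
    have hfj : ((j.factorial : ℂ)) ≠ 0 := Nat.cast_ne_zero.mpr j.factorial_ne_zero
    simp only [hA, hB, poch_add b i j]
    field_simp
  -- basic positivity facts
  have hDre : 0 < (1 - y).re := one_sub_re_pos hy1
  have hD0 : (1 : ℂ) - y ≠ 0 := by
    intro hc; rw [hc] at hDre; simp at hDre
  have hDge : 1 - ‖y‖ ≤ ‖(1:ℂ) - y‖ := by
    have := norm_sub_norm_le (1 : ℂ) y
    simpa using this
  have h1t : (0:ℝ) < 1 - ‖y‖ := by linarith
  have hxD : ‖x / (1 - y)‖ < 1 := by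
    rw [norm_div]
    rw [div_lt_one (by linarith)]
    linarith
  -- summability of norms
  set a0 : ℝ := ‖c - 1‖ with ha0
  set t : ℝ := ‖y‖ with htdef
  have hBle : ∀ i j, ‖B i j‖ ≤ (ascPochhammer ℝ j).eval (a0 + i) / j.factorial * t ^ j := by
    intro i j
    have hbound : ‖c - 1 + (i:ℂ)‖ ≤ a0 + i := by
      calc ‖c - 1 + (i:ℂ)‖ ≤ ‖c - 1‖ + ‖(i:ℂ)‖ := norm_add_le _ _
      _ = a0 + i := by rw [Complex.norm_natCast]
    simp only [hB, norm_mul, norm_div, norm_pow, Complex.norm_natCast]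
    have ht0 : (0:ℝ) ≤ ‖y‖ ^ j := by positivity
    have hfj : (0:ℝ) < (j.factorial : ℝ) := by positivity
    exact mul_le_mul_of_nonneg_right
      (div_le_div_of_nonneg_right (norm_poch_le hbound j) hfj.le) ht0
  have hMaj : ∀ i : ℕ, HasSum (fun j : ℕ => (ascPochhammer ℝ j).eval (a0 + i) / j.factorial * t ^ j)
      ((1 - t) ^ (-(a0 + i)) : ℝ) := fun i => hasSum_binom_real (a0 + i) hy0 hy1
  have hSummB : ∀ i, Summable fun j => ‖B i j‖ := fun i =>
    Summable.of_nonneg_of_le (fun j => norm_nonneg _) (hBle i) (hMaj i).summable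
  have htsumB : ∀ i, ∑' j, ‖B i j‖ ≤ ((1 - t) ^ (-(a0 + i)) : ℝ) := fun i =>
    le_trans (Summable.tsum_le_tsum (hBle i) (hSummB i) (hMaj i).summable) (le_of_eq (hMaj i).tsum_eq)
  have hAle : ∀ i, ‖A i‖ ≤ (ascPochhammer ℝ i).eval ‖b‖ / i.factorial * ‖x‖ ^ i := by
    intro i
    simp only [hA, norm_mul, norm_div, norm_pow, Complex.norm_natCast]
    have ht0 : (0:ℝ) ≤ ‖x‖ ^ i := by positivity
    have hfi : (0:ℝ) < (i.factorial : ℝ) := by positivity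
    exact mul_le_mul_of_nonneg_right
      (div_le_div_of_nonneg_right (norm_poch_le le_rfl i) hfi.le) ht0
  set r : ℝ := ‖x‖ / (1 - t) with hrdef
  have hr0 : 0 ≤ r := by positivity
  have hr1 : r < 1 := by rw [hrdef, div_lt_one h1t]; linarith
  set g : ℕ → ℝ := fun i =>
    (ascPochhammer ℝ i).eval ‖b‖ / i.factorial * r ^ i * ((1 - t) ^ (-a0) : ℝ) with hg
  have hgs : Summable g := ((hasSum_binom_real ‖b‖ hr0 hr1).summable.mul_right _)
  have hkey : ∀ i, ‖A i‖ * ∑' j, ‖B i j‖ ≤ g i := by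
    intro i
    have heq : (ascPochhammer ℝ i).eval ‖b‖ / i.factorial * ‖x‖ ^ i *
        ((1 - t) ^ (-(a0 + (i:ℝ))) : ℝ) = g i := by
      rw [show -(a0 + (i:ℝ)) = -a0 - i by ring, Real.rpow_sub h1t, Real.rpow_natCast, hg]
      simp only [hrdef, div_pow]
      have : (1 - t) ^ i ≠ 0 := by positivity
      field_simp
    calc ‖A i‖ * ∑' j, ‖B i j‖
        ≤ ((ascPochhammer ℝ i).eval ‖b‖ / i.factorial * ‖x‖ ^ i) *
          ((1 - t) ^ (-(a0 + (i:ℝ))) : ℝ) := by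
          have h1 : (0:ℝ) ≤ ∑' j, ‖B i j‖ := tsum_nonneg fun j => norm_nonneg _
          have h2 := htsumB i
          push_cast at h2 ⊢
          exact mul_le_mul (hAle i) h2 h1
            (mul_nonneg (div_nonneg (pochR_nonneg (norm_nonneg b) i) (by positivity))
              (by positivity))
      _ = g i := heq
  have hnormsum : Summable fun p : ℕ × ℕ => ‖A p.1 * B p.1 p.2‖ := by
    have h0 : ∀ p : ℕ × ℕ, 0 ≤ ‖A p.1 * B p.1 p.2‖ := fun p => norm_nonneg _
    have h2 : ∀ i : ℕ, Summable fun j => ‖A i * B i j‖ := by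
      intro i
      have := (hSummB i).mul_left ‖A i‖
      exact this.congr fun j => (norm_mul _ _).symm
    have h3 : Summable fun i : ℕ => ∑' j, ‖A i * B i j‖ := by
      refine Summable.of_nonneg_of_le (fun i => tsum_nonneg fun j => norm_nonneg _)
        (fun i => ?_) hgs
      calc ∑' j, ‖A i * B i j‖ = ∑' j, ‖A i‖ * ‖B i j‖ := tsum_congr fun j => norm_mul _ _
      _ = ‖A i‖ * ∑' j, ‖B i j‖ := tsum_mul_left
      _ ≤ g i := hkey i
    exact (summable_prod_of_nonneg h0).mpr ⟨h2, h3⟩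
  have hsummable : Summable fun p : ℕ × ℕ => A p.1 * B p.1 p.2 :=
    Summable.of_norm hnormsum
  -- main computation
  rw [tsum_congr hterm, Summable.tsum_prod' hsummable hsummable.prod_factor]
  have hstep1 : ∀ i : ℕ, ∑' j, A i * B i j = (1 - y) ^ (1 - c) *
      (poch b i / i.factorial * (x / (1 - y)) ^ i) := by
    intro i
    rw [tsum_mul_left, (hasSum_binom (c - 1 + (i:ℂ)) hy1).tsum_eq]
    rw [show -(c - 1 + (i:ℂ)) = (1 - c) + (-(i:ℂ)) by ring, cpow_add _ _ hD0,
      cpow_neg, cpow_natCast]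
    simp only [hA]
    rw [div_pow]
    have hpow : ((1:ℂ) - y) ^ i ≠ 0 := pow_ne_zero _ hD0
    field_simp
  rw [tsum_congr hstep1, tsum_mul_left, (hasSum_binom b hxD).tsum_eq]
  -- final cpow algebra
  have hqre : 0 < (1 - x / (1 - y)).re := one_sub_re_pos hxD
  have hmul : (1 - x / (1 - y)) * (1 - y) = 1 - x - y := by
    field_simp
    ring
  have hfact : (1 - x - y) ^ (-b) = (1 - x / (1 - y)) ^ (-b) * (1 - y) ^ (-b) := by
    rw [← hmul]
    exact cpow_mul_re_pos hqre hDre (-b)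
  have hsolve : (1 - x / (1 - y)) ^ (-b) = (1 - x - y) ^ (-b) * (1 - y) ^ b := by
    rw [hfact, mul_assoc, ← cpow_add _ _ hD0]
    simp
  rw [hsolve, show (b - c + 1 : ℂ) = (1 - c) + b by ring, cpow_add _ _ hD0]
  ring
end
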